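/- Let f : ℝ^n → ℝ be differentiable, α > 0, and L₁, …, L_n > 0. Define the weighted norm ‖d‖_L = Σ_i √(L_i)|d_i|. Then at least one steepest-descent direction with respect to the L-norm has exactly two non-zero coordinates; that is, min over d ∈ ℝ^n with ⟨d, 1⟩ = 0 of ∇f(x)ᵀd + (1/(2α))‖d‖_L² equals the minimum over pairs (i, j) of the minimum over d_{ij} ∈ ℝ² with d_i + d_j = 0 of ∇_{ij}f(x)ᵀd_{ij} + (1/(2α))‖d_{ij}‖_L². A minimizer is supported on a pair (i, j) maximizing (∇_i f(x) − ∇_j f(x))/(√(L_i) + √(L_j)), with d_i = −δ, d_j = δ where δ = (α/(√(L_i) + √(L_j))²)(∇_i f(x) − ∇_j f(x)). -/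

import Mathlib

private lemma sum_mul_single18 {n : ℕ} (h : Fin n → ℝ) (a : Fin n) (c : ℝ) :
    ∑ k, h k * (Pi.single a c : Fin n → ℝ) k = h a * c := by
  simp [Pi.single_apply, mul_ite, Finset.sum_ite_eq']

private lemma sum_mul_two18 {n : ℕ} (h : Fin n → ℝ) (a b : Fin n) (c c' : ℝ) :
    ∑ k, h k * ((Pi.single a c + Pi.single b c' : Fin n → ℝ)) k = h a * c + h b * c' := by
  simp only [Pi.add_apply, mul_add, Finset.sum_add_distrib, sum_mul_single18]

private lemma sum_abs_two18 {n : ℕ} (s : Fin n → ℝ) (a b : Fin n) (hab : a ≠ b) (c c' : ℝ) :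
    ∑ k, s k * |((Pi.single a c + Pi.single b c' : Fin n → ℝ)) k| = s a * |c| + s b * |c'| := by
  have h1 : ∀ k, s k * |((Pi.single a c + Pi.single b c' : Fin n → ℝ)) k|
      = s k * |(Pi.single a c : Fin n → ℝ) k| + s k * |(Pi.single b c' : Fin n → ℝ) k| := by
    intro k
    by_cases hk : k = a <;> by_cases hk' : k = b
    · exact (hab (hk ▸ hk')).elim
    all_goals simp [Pi.single_apply, hk, hk', hab, Ne.symm hab]
  rw [Finset.sum_congr rfl fun k _ => h1 k, Finset.sum_add_distrib]
  have h2 : ∀ (a : Fin n) (c : ℝ), ∑ k, s k * |(Pi.single a c : Fin n → ℝ) k| = s a * |c| := by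
    intro a c
    simp [Pi.single_apply, apply_ite abs, mul_ite, Finset.sum_ite_eq']
  rw [h2, h2]

private lemma aux_key18 {n : ℕ} (g s : Fin n → ℝ) (M : ℝ)
    (hMb : ∀ a b : Fin n, g a - g b ≤ M * (s a + s b)) (i : Fin n)
    (e : Fin n → ℝ) (he : ∑ k, e k = 0) :
    -(M * ∑ k, s k * |e k|) ≤ ∑ k, g k * e k := by
  classical
  obtain ⟨c, hc1, hc2⟩ : ∃ c : ℝ, (∀ k, g k - M * s k ≤ c) ∧ (∀ k, c ≤ g k + M * s k) := by
    have hne : (Finset.univ : Finset (Fin n)).Nonempty := ⟨i, Finset.mem_univ i⟩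
    refine ⟨(Finset.univ : Finset (Fin n)).sup' hne (fun k => g k - M * s k), ?_, ?_⟩
    · intro k; exact Finset.le_sup' (fun k => g k - M * s k) (Finset.mem_univ k)
    · intro k
      apply Finset.sup'_le
      intro a _
      have := hMb a k
      linarith
  have h1 : ∑ k, (g k - c) * e k = ∑ k, g k * e k := by
    simp only [sub_mul, Finset.sum_sub_distrib, ← Finset.mul_sum, he, mul_zero, sub_zero]
  have h2 : ∀ k, -(M * (s k * |e k|)) ≤ (g k - c) * e k := by
    intro k
    rcases le_or_gt 0 (e k) with h | h
    · rw [abs_of_nonneg h]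
      nlinarith [mul_nonneg (show (0:ℝ) ≤ g k - c + M * s k by linarith [hc2 k]) h]
    · rw [abs_of_neg h]
      nlinarith [mul_nonneg (show (0:ℝ) ≤ c - g k + M * s k by linarith [hc1 k])
        (show (0:ℝ) ≤ -e k by linarith)]
  calc -(M * ∑ k, s k * |e k|) = ∑ k, -(M * (s k * |e k|)) := by
        rw [Finset.mul_sum, ← Finset.sum_neg_distrib]
    _ ≤ ∑ k, (g k - c) * e k := Finset.sum_le_sum fun k _ => h2 k
    _ = ∑ k, g k * e k := h1

private lemma aux_lb18 {n : ℕ} (g s : Fin n → ℝ) (hs : ∀ k, 0 < s k) (α M : ℝ)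
    (hα : 0 < α) (hM : 0 ≤ M)
    (hMb : ∀ a b : Fin n, g a - g b ≤ M * (s a + s b)) (i : Fin n)
    (e : Fin n → ℝ) (he : ∑ k, e k = 0) :
    -(α * M ^ 2) / 2 ≤ (∑ k, g k * e k) + 1 / (2 * α) * (∑ k, s k * |e k|) ^ 2 := by
  have hS : 0 ≤ ∑ k, s k * |e k| :=
    Finset.sum_nonneg fun k _ => mul_nonneg (hs k).le (abs_nonneg _)
  have hkey := aux_key18 g s M hMb i e he
  set S := ∑ k, s k * |e k| with hS_def
  have h2α : (0:ℝ) < 2 * α := by linarith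
  have hq : M * S - α * M ^ 2 / 2 ≤ S ^ 2 / (2 * α) := by
    rw [le_div_iff₀ h2α]
    nlinarith [sq_nonneg (S - α * M)]
  have : 1 / (2 * α) * S ^ 2 = S ^ 2 / (2 * α) := by ring
  linarith

theorem stmt_18 {n : ℕ} (f : (Fin n → ℝ) → ℝ) (x : Fin n → ℝ)
    (hf : DifferentiableAt ℝ f x) (α : ℝ) (hα : 0 < α)
    (g : Fin n → ℝ) (hg : ∀ i, g i = fderiv ℝ f x (Pi.single i 1))
    (L : Fin n → ℝ) (hL : ∀ i, 0 < L i)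
    (i j : Fin n)
    (hij : ∀ a b : Fin n, (g a - g b) / (Real.sqrt (L a) + Real.sqrt (L b)) ≤
      (g i - g j) / (Real.sqrt (L i) + Real.sqrt (L j)))
    (δ : ℝ) (hδ : δ = α / (Real.sqrt (L i) + Real.sqrt (L j)) ^ 2 * (g i - g j))
    (d : Fin n → ℝ) (hd : d = Pi.single i (-δ) + Pi.single j δ) :
    (∑ k, d k = 0) ∧
    (∀ e : Fin n → ℝ, ∑ k, e k = 0 →
      (∑ k, g k * d k) + 1 / (2 * α) * (∑ k, Real.sqrt (L k) * |d k|) ^ 2 ≤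
        (∑ k, g k * e k) + 1 / (2 * α) * (∑ k, Real.sqrt (L k) * |e k|) ^ 2) ∧
    (∀ a b : Fin n, ∀ e : ℝ,
      (∑ k, g k * d k) + 1 / (2 * α) * (∑ k, Real.sqrt (L k) * |d k|) ^ 2 ≤
        g a * e + g b * (-e) +
          1 / (2 * α) * (Real.sqrt (L a) * |e| + Real.sqrt (L b) * |(-e)|) ^ 2) := by
  classical
  set s : Fin n → ℝ := fun k => Real.sqrt (L k) with hs_def
  have hs : ∀ k, 0 < s k := fun k => Real.sqrt_pos.2 (hL k)
  have hspos : ∀ a b : Fin n, 0 < s a + s b := fun a b => add_pos (hs a) (hs b)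
  set M : ℝ := (g i - g j) / (s i + s j) with hM_def
  have hM : 0 ≤ M := by
    have h := hij i i
    rw [sub_self, zero_div] at h
    exact h
  have hMb : ∀ a b : Fin n, g a - g b ≤ M * (s a + s b) := by
    intro a b
    have h := hij a b
    rw [div_le_iff₀ (hspos a b)] at h
    simpa [mul_comm] using h
  have hgij : g i - g j = M * (s i + s j) := by
    rw [hM_def, div_mul_cancel₀ _ (hspos i j).ne']
  have hδ' : δ = α * M / (s i + s j) := by
    rw [hδ, hgij]
    change α / (s i + s j) ^ 2 * (M * (s i + s j)) = α * M / (s i + s j)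
    field_simp [(hspos i j).ne']
  have hδnn : 0 ≤ δ := by
    rw [hδ']
    positivity
  -- value at d
  have hGd : ∑ k, g k * d k = -(α * M ^ 2) := by
    rw [hd, sum_mul_two18, hδ']
    have h1 : g i * -(α * M / (s i + s j)) + g j * (α * M / (s i + s j))
        = -((g i - g j) * (α * M) / (s i + s j)) := by ring
    rw [h1, hgij]
    field_simp [(hspos i j).ne']
  have hval : (∑ k, g k * d k) + 1 / (2 * α) * (∑ k, s k * |d k|) ^ 2
      = -(α * M ^ 2) / 2 := by
    by_cases hijeq : i = j
    · have hM0 : M = 0 := by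
        rw [hM_def, hijeq, sub_self, zero_div]
      have hδ0 : δ = 0 := by
        rw [hδ', hM0]
        simp
      have hd0 : d = 0 := by
        rw [hd, hδ0]
        funext k
        simp
      rw [hd0, hM0]
      simp
    · have hSd : ∑ k, s k * |d k| = α * M := by
        rw [hd, sum_abs_two18 s i j hijeq, abs_neg, abs_of_nonneg hδnn, hδ']
        field_simp [(hspos i j).ne']
      rw [hGd, hSd]
      field_simp
      ring
  refine ⟨?_, ?_, ?_⟩
  · rw [hd]
    simp [Finset.sum_add_distrib, Finset.sum_pi_single']
  · intro e he
    rw [hval]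
    exact aux_lb18 g s hs α M hα hM hMb i e he
  · intro a b e
    by_cases hab : a = b
    · subst hab
      rw [hval]
      have h0 : 0 ≤ 1 / (2 * α) * (s a * |e| + s a * |(-e)|) ^ 2 := by positivity
      have h1 : 0 ≤ α * M ^ 2 := by positivity
      nlinarith
    · have hfeas : ∑ k, ((Pi.single a e + Pi.single b (-e) : Fin n → ℝ)) k = 0 := by
        simp [Finset.sum_add_distrib, Finset.sum_pi_single']
      have := aux_lb18 g s hs α M hα hM hMb i
        ((Pi.single a e + Pi.single b (-e) : Fin n → ℝ)) hfeas
      rw [sum_mul_two18, sum_abs_two18 s a b hab] at this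
      rw [hval]
      exact this
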